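/- Good translations lie on finitely many unit spheres: Let θ⁺, θ⁻ ∈ ℝ with θ⁺ − θ⁻ ∈ 𝒢_𝔸. Then there exists a finite set F ⊂ {y' − x' : x' ∈ e^{iθ⁺}𝓛, y' ∈ e^{iθ⁻}𝓛} such that for all τ⁺, τ⁻ ∈ ℝ² of the form λ₁ + λ₂ω with λ₁, λ₂ ∈ [0,1): if there exist x ∈ 𝓛(θ⁺,τ⁺,1) and y ∈ 𝓛(θ⁻,τ⁻,1) with |x − y| = 1, then |e^{iθ⁺}τ⁺ − e^{iθ⁻}τ⁻ − c| = 1 for some c ∈ F. In other words, the set of good translations is contained in a finite union of spheres of radius 1. -/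

import Mathlib

open Filter Set

noncomputable section

namespace HeitmannRadin

/-- The rotation `e^{iθ}` as a complex number. -/
def rot (θ : ℝ) : ℂ := Complex.exp ((θ : ℂ) * Complex.I)

/-- `ω = 1/2 + (√3/2) i`. -/
def omega : ℂ := 1 / 2 + (Real.sqrt 3 / 2 : ℝ) * Complex.I

/-- The triangular lattice `𝓛 = {p + qω : p, q ∈ ℤ}`. -/
def Lat : Set ℂ := {z : ℂ | ∃ p q : ℤ, z = (p : ℂ) + (q : ℂ) * omega}

/-- A lattice isometry: `none` is the vacuum `𝟎`, `some (θ, τ)` is the triple `(θ, τ, 1)`. -/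
abbrev LatIso := Option (ℝ × ℂ)

/-- The lattice `𝓛(z)` of a lattice isometry: `𝓛(θ,τ,1) = e^{iθ}(𝓛 + τ)`, `𝓛(𝟎) = ∅`. -/
def latt : LatIso → Set ℂ
  | none => ∅
  | some z => (fun v => rot z.1 * (v + z.2)) '' Lat

/-- The scaled lattice `ε𝓛(z)`. -/
def scaledLatt (ε : ℝ) (z : LatIso) : Set ℂ := (fun v => (ε : ℂ) * v) '' latt z

/-- A finite configuration is ε-admissible if distinct points have mutual distance ≥ ε. -/
def Admissible (ε : ℝ) (X : Finset ℂ) : Prop :=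
  ∀ x ∈ X, ∀ y ∈ X, x ≠ y → ε ≤ dist x y

/-- The number of ε-neighbors `#𝒩_ε(x)` of `x` in the configuration `X`. -/
def nbhd (ε : ℝ) (X : Finset ℂ) (x : ℂ) : ℕ :=
  {y ∈ (X : Set ℂ) | dist x y = ε}.ncard

/-- The localized energy `E_ε(X, B) = (1/2)∑_{x ∈ X ∩ B} ε(6 − #𝒩_ε(x))`. -/
def energy (ε : ℝ) (X : Finset ℂ) (B : Set ℂ) : ℝ :=
  (1 / 2) * ∑ x ∈ X, B.indicator (fun _ => ε * (6 - (nbhd ε X x : ℝ))) x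

/-- `ν` rotated clockwise by `π/2`. -/
def perp (ν : ℂ) : ℂ := -Complex.I * ν

/-- The inner product of `ℝ²` read through `ℂ`. -/
def rinner (w v : ℂ) : ℝ := (w * (starRingEnd ℂ) v).re

/-- The half-open unit cube `Q^ν`. -/
def Qunit (ν : ℂ) : Set ℂ :=
  {w : ℂ | -(1 / 2) ≤ rinner w ν ∧ rinner w ν < 1 / 2 ∧
    -(1 / 2) ≤ rinner w (perp ν) ∧ rinner w (perp ν) < 1 / 2}

/-- The scaled cube `r Q^ν` (centered at the origin). -/
def Qs (ν : ℂ) (r : ℝ) : Set ℂ := (fun u => (r : ℂ) * u) '' Qunit ν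

/-- The cube `Q^ν_ρ(x₀) = x₀ + ρ Q^ν`. -/
def Qc (ν : ℂ) (ρ : ℝ) (x₀ : ℂ) : Set ℂ := (fun u => x₀ + u) '' Qs ν ρ

/-- The boundary regions `∂^±_ε Q^ν_ρ(x₀)`; `true` stands for `+`, `false` for `−`. -/
def bdry (ε : ℝ) (ν : ℂ) (ρ : ℝ) (x₀ : ℂ) (s : Bool) : Set ℂ :=
  (fun u => x₀ + u) ''
    {w ∈ closure (Qs ν (ρ + 10 * ε) \ Qs ν (ρ - 10 * ε)) |
      5 * ε ≤ if s then rinner ν w else -(rinner ν w)}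

/-- The boundary conditions `X = ε𝓛(z⁺)` on `∂⁺_ε Q^ν_ρ(x₀)` and `X = ε𝓛(z⁻)` on
`∂⁻_ε Q^ν_ρ(x₀)`. -/
def BC (ε : ℝ) (ν : ℂ) (ρ : ℝ) (x₀ : ℂ) (zp zm : LatIso) (X : Finset ℂ) : Prop :=
  (X : Set ℂ) ∩ bdry ε ν ρ x₀ true = scaledLatt ε zp ∩ bdry ε ν ρ x₀ true ∧
  (X : Set ℂ) ∩ bdry ε ν ρ x₀ false = scaledLatt ε zm ∩ bdry ε ν ρ x₀ false

/-- The minimal cell energy `m_ε(z⁺,z⁻,ν,ρ,x₀)`. -/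
def mVal (ε : ℝ) (zp zm : LatIso) (ν : ℂ) (ρ : ℝ) (x₀ : ℂ) : ℝ :=
  sInf {e : ℝ | ∃ X : Finset ℂ, Admissible ε X ∧ BC ε ν ρ x₀ zp zm X ∧
    e = energy ε X (Qc ν ρ x₀)}

/-- The cell energy infimized also over the centers (at lattice spacing 1). -/
def cellInf (zp zm : LatIso) (ν : ℂ) (T : ℝ) : ℝ :=
  sInf {e : ℝ | ∃ (y : ℂ) (X : Finset ℂ), Admissible 1 X ∧ BC 1 ν T y zp zm X ∧
    e = energy 1 X (Qc ν T y)}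

/-- The density `φ̄(z⁺,z⁻,ν)`. -/
def phiBar (zp zm : LatIso) (ν : ℂ) : ℝ :=
  Filter.liminf (fun T : ℝ => (1 / T) * cellInf zp zm ν T) Filter.atTop

/-- The hexagonal density `φ_hex(ξ) = (2/√3)∑_{k=1}^{3}|⟨ξ, ω^k⟩|`. -/
def phiHex (ξ : ℂ) : ℝ := (2 / Real.sqrt 3) * ∑ k ∈ Finset.range 3, |rinner ξ (omega ^ (k + 1))|

/-- The set of good angles `𝒢_𝔸`. -/
def goodAngle (θ : ℝ) : Prop :=
  ∃ v₁ ∈ Lat, ∃ v₂ ∈ Lat, v₁ ≠ 0 ∧ v₂ ≠ 0 ∧ rot θ = v₁ / v₂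

/-- Convergence of angles modulo `π/3` as `T → +∞`. -/
def ModAngleTendsto (f : ℝ → ℝ) (θ : ℝ) : Prop :=
  ∃ k : ℝ → ℤ, Filter.Tendsto (fun T => f T - θ - Real.pi / 3 * (k T : ℝ)) Filter.atTop (nhds 0)

/-- Convergence of translations modulo `𝓛` as `T → +∞`. -/
def ModLatTendsto (f : ℝ → ℂ) (τ : ℂ) : Prop :=
  ∃ v : ℝ → ℂ, (∀ T, v T ∈ Lat) ∧ Filter.Tendsto (fun T => f T - τ - v T) Filter.atTop (nhds 0)

/-- Convergence in the state space `𝒵`. -/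
def ZTendsto (f : ℝ → LatIso) : LatIso → Prop
  | none => ∀ᶠ T in Filter.atTop, f T = none
  | some z => ∃ (θf : ℝ → ℝ) (τf : ℝ → ℂ), (∀ᶠ T in Filter.atTop, f T = some (θf T, τf T)) ∧
      ModAngleTendsto θf z.1 ∧ ModLatTendsto τf z.2

/-- The cell formula `Φ(z⁺,z⁻,ν)` with converging boundary values. -/
def PhiVal (zp zm : LatIso) (ν : ℂ) : ℝ :=
  sInf {L : ℝ | ∃ fp fm : ℝ → LatIso, ZTendsto fp zp ∧ ZTendsto fm zm ∧
    L = Filter.liminf (fun T : ℝ => (1 / T) * cellInf (fp T) (fm T) ν T) Filter.atTop}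

/-- Two points of `Y` are joined by a chain in `Y` with consecutive distances 1. -/
def Chain (Y : Set ℂ) (x y : ℂ) : Prop :=
  ∃ (n : ℕ) (v : ℕ → ℂ), v 0 = x ∧ v n = y ∧ (∀ i ≤ n, v i ∈ Y) ∧
    ∀ i < n, dist (v i) (v (i + 1)) = 1

/-- A configuration is connected if all pairs of its points are joined by chains. -/
def ConnectedConf (Y : Set ℂ) : Prop := ∀ x ∈ Y, ∀ y ∈ Y, Chain Y x y

/-- A configuration is strongly connected if moreover removing any point keeps it connected. -/
def StronglyConnectedConf (Y : Set ℂ) : Prop :=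
  ConnectedConf Y ∧ ∀ x ∈ Y, ConnectedConf (Y \ {x})

open Classical in
/-- The boundary `∂Y` of `Y` inside `Q`. -/
def confBdry (Y : Finset ℂ) (Q : Set ℂ) : Finset ℂ :=
  Y.filter fun x => x ∈ Q ∧ {y' ∈ (Y : Set ℂ) | dist x y' = 1}.ncard < 6

/-- The maximal component `M^±` of strongly connected subsets of `X ∩ 𝓛(z)` meeting the
boundary region on side `s`. -/
def maxComp (X : Finset ℂ) (z : LatIso) (ν : ℂ) (T : ℝ) (y : ℂ) (s : Bool) : Set ℂ :=
  {x : ℂ | ∃ Z : Set ℂ, Z ⊆ (X : Set ℂ) ∩ latt z ∧ (Z ∩ bdry 1 ν T y s).Nonempty ∧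
    StronglyConnectedConf Z ∧ x ∈ Z}


lemma omega_sq : omega ^ 2 = omega - 1 := by
  have h3 : ((Real.sqrt 3 : ℝ) : ℂ) * ((Real.sqrt 3 : ℝ) : ℂ) = 3 := by
    norm_cast
    rw [Real.mul_self_sqrt] <;> norm_num
  unfold omega
  have hI : Complex.I ^ 2 = -1 := Complex.I_sq
  push_cast
  linear_combination (1/4 : ℂ) * Complex.I ^ 2 * h3 + (3/4 : ℂ) * hI

lemma abs_omega : ‖omega‖ = 1 := by
  have : Complex.normSq omega = 1 := by
    rw [Complex.normSq_apply]
    simp [omega]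
    rw [div_mul_div_comm, Real.mul_self_sqrt] <;> norm_num
  rw [Complex.norm_def, this, Real.sqrt_one]

lemma omega_im : omega.im = Real.sqrt 3 / 2 := by simp [omega]
lemma omega_re : omega.re = 1 / 2 := by simp [omega]

lemma lat_mul {a b : ℂ} (ha : a ∈ Lat) (hb : b ∈ Lat) : a * b ∈ Lat := by
  obtain ⟨p, q, rfl⟩ := ha
  obtain ⟨p', q', rfl⟩ := hb
  refine ⟨p * p' - q * q', p * q' + q * p' + q * q', ?_⟩
  push_cast
  linear_combination ((q : ℂ) * (q' : ℂ)) * omega_sq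

lemma lat_sub {a b : ℂ} (ha : a ∈ Lat) (hb : b ∈ Lat) : a - b ∈ Lat := by
  obtain ⟨p, q, rfl⟩ := ha
  obtain ⟨p', q', rfl⟩ := hb
  exact ⟨p - p', q - q', by push_cast; ring⟩

lemma lat_bounded_finite (R : ℝ) : {u : ℂ | u ∈ Lat ∧ ‖u‖ ≤ R}.Finite := by
  set N : ℤ := ⌈3 * R⌉ with hN
  apply Set.Finite.subset (((Set.finite_Icc (-N) N).prod (Set.finite_Icc (-N) N)).image
    (fun pq : ℤ × ℤ => (pq.1 : ℂ) + (pq.2 : ℂ) * omega))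
  rintro u ⟨⟨p, q, rfl⟩, habs⟩
  have hR : 0 ≤ R := le_trans (norm_nonneg _) habs
  have hsqrt : (1 : ℝ) ≤ Real.sqrt 3 := by
    rw [show (1:ℝ) = Real.sqrt 1 from Real.sqrt_one.symm]
    exact Real.sqrt_le_sqrt (by norm_num)
  have him : ((p : ℂ) + (q : ℂ) * omega).im = q * (Real.sqrt 3 / 2) := by
    simp [omega]
  have hre : ((p : ℂ) + (q : ℂ) * omega).re = p + q * (1 / 2) := by
    simp [omega]
  have h1 : |(q : ℝ) * (Real.sqrt 3 / 2)| ≤ R := by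
    rw [← him]; exact le_trans (Complex.abs_im_le_norm _) habs
  have hq : |(q : ℝ)| ≤ 2 * R := by
    rw [abs_mul] at h1
    have h2 : |Real.sqrt 3 / 2| = Real.sqrt 3 / 2 := abs_of_nonneg (by positivity)
    rw [h2] at h1
    nlinarith [abs_nonneg ((q : ℝ))]
  have h3 : |(p : ℝ) + q * (1 / 2)| ≤ R := by
    rw [← hre]; exact le_trans (Complex.abs_re_le_norm _) habs
  have hp : |(p : ℝ)| ≤ 2 * R := by
    obtain ⟨a, b⟩ := abs_le.1 hq
    obtain ⟨a', b'⟩ := abs_le.1 h3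
    exact abs_le.2 ⟨by linarith, by linarith⟩
  have hNR : 3 * R ≤ (N : ℝ) := Int.le_ceil _
  have key : ∀ m : ℤ, |(m : ℝ)| ≤ 2 * R → m ∈ Set.Icc (-N) N := by
    intro m hm
    obtain ⟨a, b⟩ := abs_le.1 hm
    constructor
    · have : ((-N : ℤ) : ℝ) ≤ (m : ℝ) := by push_cast; linarith
      exact_mod_cast this
    · have : (m : ℝ) ≤ ((N : ℤ) : ℝ) := by push_cast; linarith
      exact_mod_cast this
  exact ⟨(p, q), ⟨key p hp, key q hq⟩, rfl⟩

lemma abs_rot (θ : ℝ) : ‖rot θ‖ = 1 := Complex.norm_exp_ofReal_mul_I θ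

lemma rot_ne_zero (θ : ℝ) : rot θ ≠ 0 := Complex.exp_ne_zero _

lemma rot_split (θp θm : ℝ) : rot θp = rot θm * rot (θp - θm) := by
  unfold rot
  rw [← Complex.exp_add]
  push_cast
  ring_nf

/-- Good translations lie on finitely many unit spheres. -/
theorem good_translations_on_finitely_many_spheres (θp θm : ℝ)
    (hgood : goodAngle (θp - θm)) :
    ∃ F : Finset ℂ,
      (∀ c ∈ F, ∃ x' ∈ Lat, ∃ y' ∈ Lat, c = rot θm * y' - rot θp * x') ∧
      ∀ lp1 lp2 lm1 lm2 : ℝ, 0 ≤ lp1 → lp1 < 1 → 0 ≤ lp2 → lp2 < 1 →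
        0 ≤ lm1 → lm1 < 1 → 0 ≤ lm2 → lm2 < 1 →
        (∃ x ∈ latt (some (θp, (lp1 : ℂ) + (lp2 : ℂ) * omega)),
          ∃ y ∈ latt (some (θm, (lm1 : ℂ) + (lm2 : ℂ) * omega)), dist x y = 1) →
        ∃ c ∈ F,
          ‖rot θp * ((lp1 : ℂ) + (lp2 : ℂ) * omega) -
            rot θm * ((lm1 : ℂ) + (lm2 : ℂ) * omega) - c‖ = 1 := by
  obtain ⟨v₁, hv₁, v₂, hv₂, hv₁0, hv₂0, hrot⟩ := hgood
  have hrm : rot θm ≠ 0 := rot_ne_zero θm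
  set S : Set ℂ := {c | (∃ x' ∈ Lat, ∃ y' ∈ Lat, c = rot θm * y' - rot θp * x') ∧
    ‖c‖ ≤ 5} with hSdef
  have hSfin : S.Finite := by
    apply Set.Finite.subset (((lat_bounded_finite (5 * ‖v₂‖)).image
      (fun u => rot θm / v₂ * u)))
    rintro c ⟨⟨x', hx', y', hy', rfl⟩, hcle⟩
    refine ⟨v₂ * y' - v₁ * x', ⟨lat_sub (lat_mul hv₂ hy') (lat_mul hv₁ hx'), ?_⟩, ?_⟩
    · have heq : v₂ * y' - v₁ * x' = v₂ / rot θm * (rot θm * y' - rot θp * x') := by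
        rw [rot_split θp θm, hrot]
        field_simp
      rw [heq, norm_mul, norm_div, abs_rot]
      rw [div_one, mul_comm]
      exact mul_le_mul hcle le_rfl (norm_nonneg _) (by norm_num)
    · rw [rot_split θp θm, hrot]
      field_simp
  refine ⟨hSfin.toFinset, fun c hc => (hSfin.mem_toFinset.1 hc).1, ?_⟩
  intro lp1 lp2 lm1 lm2 hp1 hp1' hp2 hp2' hm1 hm1' hm2 hm2' ⟨x, hx, y, hy, hdist⟩
  obtain ⟨v, hv, rfl⟩ := hx
  obtain ⟨w, hw, rfl⟩ := hy
  simp only at *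
  set τp : ℂ := (lp1 : ℂ) + (lp2 : ℂ) * omega with hτp
  set τm : ℂ := (lm1 : ℂ) + (lm2 : ℂ) * omega with hτm
  set c : ℂ := rot θm * w - rot θp * v with hcdef
  have hdiff : rot θp * τp - rot θm * τm - c = rot θp * (v + τp) - rot θm * (w + τm) := by
    rw [hcdef]; ring
  have habs1 : ‖rot θp * (v + τp) - rot θm * (w + τm)‖ = 1 := by
    rw [Complex.dist_eq] at hdist
    exact hdist
  have hτpbound : ∀ l1 l2 : ℝ, 0 ≤ l1 → l1 < 1 → 0 ≤ l2 → l2 < 1 →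
      ‖(l1 : ℂ) + (l2 : ℂ) * omega‖ ≤ 2 := by
    intro l1 l2 a b a' b'
    calc ‖(l1 : ℂ) + (l2 : ℂ) * omega‖
        ≤ ‖(l1 : ℂ)‖ + ‖(l2 : ℂ) * omega‖ := norm_add_le _ _
      _ = |l1| + |l2| * 1 := by rw [norm_mul, abs_omega, Complex.norm_real, Complex.norm_real, Real.norm_eq_abs, Real.norm_eq_abs]
      _ ≤ 2 := by rw [abs_of_nonneg a, abs_of_nonneg a']; linarith
  have hcS : c ∈ S := by
    refine ⟨⟨v, hv, w, hw, rfl⟩, ?_⟩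
    have : c = rot θp * τp - rot θm * τm - (rot θp * (v + τp) - rot θm * (w + τm)) := by
      rw [hcdef]; ring
    rw [this]
    have t1 := norm_sub_le (rot θp * τp - rot θm * τm)
      (rot θp * (v + τp) - rot θm * (w + τm))
    have t2 := norm_sub_le (rot θp * τp) (rot θm * τm)
    have e1 : ‖rot θp * τp‖ ≤ 2 := by
      rw [norm_mul, abs_rot, one_mul]
      exact hτpbound lp1 lp2 hp1 hp1' hp2 hp2'
    have e2 : ‖rot θm * τm‖ ≤ 2 := by
      rw [norm_mul, abs_rot, one_mul]
      exact hτpbound lm1 lm2 hm1 hm1' hm2 hm2'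
    linarith
  exact ⟨c, hSfin.mem_toFinset.2 hcS, by rw [hdiff, habs1]⟩


end HeitmannRadin
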